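/- Let S be a Dedekind domain, R a subring of S that is a Dedekind domain, I and L ideals of S with I ∩ R ≠ {0} and I ⊆ L, and M a prime ideal of S containing I. For each prime ideal Q of S containing I, set e_Q = v_Q((Q ∩ R)S). Then v_{M∩R}(L ∩ R) = max{ ⌈v_Q(L) / e_Q⌉ | Q a prime ideal of S containing I with Q ∩ R = M ∩ R }. -/

import Mathlib

set_option linter.unusedSectionVars false

noncomputable def padicExp {D : Type*} [CommRing D] (P A : Ideal D) : ℕ :=
  sSup {l : ℕ | A ≤ P ^ l}

open UniqueFactorizationMonoid Multiset

section Helpers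

variable {D : Type*} [CommRing D] [IsDomain D] [IsDedekindDomain D] [DecidableEq (Ideal D)]

lemma le_pow_iff_count {P A : Ideal D} (hP : P.IsPrime) (hP0 : P ≠ ⊥) (hA : A ≠ ⊥) {l : ℕ} :
    A ≤ P ^ l ↔ l ≤ (normalizedFactors A).count P := by
  have hirr : Irreducible P := (Ideal.prime_of_isPrime hP0 hP).irreducible
  rw [← Ideal.dvd_iff_le, pow_dvd_iff_le_emultiplicity,
    emultiplicity_eq_count_normalizedFactors hirr hA, normalize_eq, Nat.cast_le]

lemma padicExp_eq_count {P A : Ideal D} (hP : P.IsPrime) (hP0 : P ≠ ⊥) (hA : A ≠ ⊥) :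
    padicExp P A = (normalizedFactors A).count P := by
  have h : {l : ℕ | A ≤ P ^ l} = Set.Iic ((normalizedFactors A).count P) := by
    ext l; exact le_pow_iff_count hP hP0 hA
  rw [padicExp, h, csSup_Iic]

lemma count_nf_pow_prime {P p : Ideal D} (hp : Prime p) (k : ℕ) :
    (normalizedFactors (p ^ k)).count P = if P = p then k else 0 := by
  rw [normalizedFactors_pow, normalizedFactors_irreducible hp.irreducible, normalize_eq,
    Multiset.count_nsmul, Multiset.count_singleton]
  split_ifs <;> simp

lemma count_nf_prod {ι : Type*} (s : Finset ι) (g : ι → Ideal D) (h : ∀ i ∈ s, g i ≠ ⊥)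
    (P : Ideal D) :
    (normalizedFactors (∏ i ∈ s, g i)).count P = ∑ i ∈ s, (normalizedFactors (g i)).count P := by
  classical
  induction s using Finset.cons_induction with
  | empty => simp [← Ideal.one_eq_top, normalizedFactors_one]
  | cons a s ha ih =>
      rw [Finset.prod_cons, normalizedFactors_mul (h a (Finset.mem_cons_self a s))
        (by rw [Finset.prod_ne_zero_iff]; exact fun i hi => h i (Finset.mem_cons_of_mem hi)),
        Multiset.count_add, Finset.sum_cons, ih (fun i hi => h i (Finset.mem_cons_of_mem hi))]

end Helpers


section Ext
set_option linter.unusedSectionVars false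

variable {S : Type*} [CommRing S] [IsDomain S] [IsDedekindDomain S]
  (R : Subring S) [IsDedekindDomain ↥R]

lemma subtype_inj : Function.Injective ⇑R.subtype := Subtype.val_injective

lemma map_ne_bot {A : Ideal ↥R} (hA : A ≠ ⊥) : Ideal.map R.subtype A ≠ ⊥ := by
  rwa [Ne, Ideal.map_eq_bot_iff_of_injective (subtype_inj R)]

variable [DecidableEq (Ideal S)] [DecidableEq (Ideal ↥R)]

lemma one_le_e {Q : Ideal S} (hQ : Q.IsPrime) (hQ0 : Q ≠ ⊥) (hP0 : Q.comap R.subtype ≠ ⊥) :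
    1 ≤ (normalizedFactors (Ideal.map R.subtype (Q.comap R.subtype))).count Q := by
  refine (le_pow_iff_count hQ hQ0 (map_ne_bot R hP0)).mp ?_
  rw [pow_one]; exact Ideal.map_comap_le

lemma count_map_eq {Q : Ideal S} (hQ : Q.IsPrime) (hQ0 : Q ≠ ⊥) (hP0 : Q.comap R.subtype ≠ ⊥)
    (A : Ideal ↥R) : A ≠ ⊥ →
    (normalizedFactors (Ideal.map R.subtype A)).count Q
      = (normalizedFactors (Ideal.map R.subtype (Q.comap R.subtype))).count Q
        * (normalizedFactors A).count (Q.comap R.subtype) := by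
  induction A using UniqueFactorizationMonoid.induction_on_prime with
  | h₁ => exact fun h => absurd rfl h
  | h₂ A hAu =>
      intro _
      rw [Ideal.isUnit_iff.mp hAu, Ideal.map_top]
      simp only [← Ideal.one_eq_top, normalizedFactors_one, Multiset.count_zero, mul_zero]
  | h₃ A p hA hp ih =>
      intro _
      have hp0 : p ≠ ⊥ := hp.ne_zero
      have hmapp : Ideal.map R.subtype p ≠ ⊥ := map_ne_bot R hp0
      have hmapA : Ideal.map R.subtype A ≠ ⊥ := map_ne_bot R hA
      rw [Ideal.map_mul, normalizedFactors_mul hmapp hmapA, normalizedFactors_mul hp0 hA,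
        Multiset.count_add, Multiset.count_add,
        normalizedFactors_irreducible hp.irreducible, normalize_eq, Multiset.count_singleton,
        ih hA]
      by_cases hc : Q.comap R.subtype = p
      · rw [if_pos hc, ← hc]; ring
      · rw [if_neg hc]
        have hcount : (normalizedFactors (Ideal.map R.subtype p)).count Q = 0 := by
          rw [Multiset.count_eq_zero]
          intro hmem
          have hle : Ideal.map R.subtype p ≤ Q :=
            Ideal.le_of_dvd (dvd_of_mem_normalizedFactors hmem)
          have hle' : p ≤ Q.comap R.subtype := Ideal.map_le_iff_le_comap.mp hle
          have hpp : p.IsPrime := Ideal.isPrime_of_prime hp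
          have hmax : p.IsMaximal := hpp.isMaximal hp0
          exact hc ((hmax.eq_of_le (Ideal.IsPrime.comap R.subtype (hK := hQ)).ne_top hle').symm)
        rw [hcount]; ring

end Ext

set_option maxHeartbeats 2000000 in
theorem stmt_16 {S : Type*} [CommRing S] [IsDomain S] [IsDedekindDomain S]
    (R : Subring S) [IsDedekindDomain ↥R] (I L : Ideal S)
    (hI : I.comap R.subtype ≠ ⊥) (hIL : I ≤ L)
    (M : Ideal S) (hM : M.IsPrime) (hIM : I ≤ M) :
    IsGreatest
      {n : ℕ | ∃ Q : Ideal S, Q.IsPrime ∧ I ≤ Q ∧ Q.comap R.subtype = M.comap R.subtype ∧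
        n = ⌈(padicExp Q L : ℚ) /
              (padicExp Q (Ideal.map R.subtype (Q.comap R.subtype)) : ℚ)⌉₊}
      (padicExp (M.comap R.subtype) (L.comap R.subtype)) := by
  classical
  set f := R.subtype with hf
  have hfi : Function.Injective ⇑f := subtype_inj R
  set P : Ideal ↥R := M.comap f with hPdef
  have hPp : P.IsPrime := Ideal.IsPrime.comap f (hK := hM)
  have hP0 : P ≠ ⊥ := by
    intro h
    exact hI (le_bot_iff.mp (h ▸ Ideal.comap_mono hIM))
  have hL0 : L ≠ ⊥ := by
    rintro rfl
    apply hI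
    rw [le_bot_iff.mp hIL]
    exact Ideal.comap_bot_of_injective f hfi
  have hLR0 : L.comap f ≠ ⊥ := fun h => hI (le_bot_iff.mp (h ▸ Ideal.comap_mono hIL))
  -- the target value as a count
  set m : ℕ := padicExp P (L.comap f) with hmdef
  have hm : m = (normalizedFactors (L.comap f)).count P := padicExp_eq_count hPp hP0 hLR0
  -- comaps of prime factors of L are nonzero
  have hcomap_ne : ∀ Q ∈ normalizedFactors L, Ideal.comap f Q ≠ ⊥ := by
    intro Q hQ h
    exact hLR0 (le_bot_iff.mp (h ▸ Ideal.comap_mono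
      (Ideal.le_of_dvd (dvd_of_mem_normalizedFactors hQ))))
  -- the generic upper bound
  have hkey : ∀ Q : Ideal S, Q.IsPrime → Q.comap f = P →
      ⌈(padicExp Q L : ℚ) / (padicExp Q (Ideal.map f (Q.comap f)) : ℚ)⌉₊ ≤ m := by
    intro Q hQp hQc
    have hQ0 : Q ≠ ⊥ := by
      rintro rfl
      rw [Ideal.comap_bot_of_injective f hfi] at hQc
      exact hP0 hQc.symm
    have hQP0 : Q.comap f ≠ ⊥ := by rw [hQc]; exact hP0
    have he : padicExp Q (Ideal.map f (Q.comap f))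
        = (normalizedFactors (Ideal.map f (Q.comap f))).count Q :=
      padicExp_eq_count hQp hQ0 (map_ne_bot R hQP0)
    have he1 : 1 ≤ padicExp Q (Ideal.map f (Q.comap f)) := he ▸ one_le_e R hQp hQ0 hQP0
    have hv : padicExp Q L = (normalizedFactors L).count Q := padicExp_eq_count hQp hQ0 hL0
    -- find x ∈ L ∩ R with v_P(x) = m
    have hnotle : ¬ L.comap f ≤ P ^ (m + 1) := by
      rw [le_pow_iff_count hPp hP0 hLR0, ← hm]; omega
    obtain ⟨x, hxL, hxP⟩ := SetLike.not_le_iff_exists.mp hnotle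
    have hx0 : x ≠ 0 := fun h => hxP (h ▸ (P ^ (m + 1)).zero_mem)
    have hsx0 : Ideal.span {x} ≠ ⊥ := by rwa [Ne, Ideal.span_singleton_eq_bot]
    have hxm : (normalizedFactors (Ideal.span {x})).count P = m := by
      have h1 : m ≤ (normalizedFactors (Ideal.span {x})).count P := by
        rw [← le_pow_iff_count hPp hP0 hsx0, Ideal.span_singleton_le_iff_mem]
        exact (le_pow_iff_count hPp hP0 hLR0).mpr hm.le hxL
      have h2 : ¬ Ideal.span {x} ≤ P ^ (m + 1) := by
        rw [Ideal.span_singleton_le_iff_mem]; exact hxP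
      rw [le_pow_iff_count hPp hP0 hsx0] at h2
      omega
    -- v_Q(x) = e_Q * m
    have hmap : Ideal.map f (Ideal.span {x}) = Ideal.span {f x} := by
      rw [Ideal.map_span, Set.image_singleton]
    have hfx0 : Ideal.span {f x} ≠ ⊥ := by
      rw [Ne, Ideal.span_singleton_eq_bot]
      exact fun h => hx0 (hfi (by simpa using h))
    have hcnt : (normalizedFactors (Ideal.span {f x})).count Q
        = (normalizedFactors (Ideal.map f (Q.comap f))).count Q * m := by
      rw [← hmap, count_map_eq R hQp hQ0 hQP0 _ hsx0, hQc, hxm]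
    -- v_Q(L) ≤ e_Q * m
    have hvle : padicExp Q L ≤ padicExp Q (Ideal.map f (Q.comap f)) * m := by
      rw [hv, he]
      have hLQ : L ≤ Q ^ ((normalizedFactors L).count Q) :=
        (le_pow_iff_count hQp hQ0 hL0).mpr le_rfl
      have : Ideal.span {f x} ≤ Q ^ ((normalizedFactors L).count Q) :=
        le_trans ((Ideal.span_singleton_le_iff_mem _).mpr hxL) hLQ
      rw [le_pow_iff_count hQp hQ0 hfx0, hcnt] at this
      exact this
    rw [Nat.ceil_le, div_le_iff₀ (by exact_mod_cast he1)]
    exact_mod_cast hvle.trans (by rw [mul_comm])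
  constructor
  · -- membership
    set T : Finset (Ideal S) :=
      (normalizedFactors L).toFinset.filter (fun Q => Q.comap f = P) with hTdef
    set g : Ideal S → ℕ := fun Q =>
      ⌈(padicExp Q L : ℚ) / (padicExp Q (Ideal.map f (Q.comap f)) : ℚ)⌉₊ with hgdef
    set m' : ℕ := T.sup g with hm'def
    have hTfacts : ∀ Q ∈ T, Q.IsPrime ∧ Q ≠ ⊥ ∧ Q.comap f = P ∧ L ≤ Q := by
      intro Q hQ
      rw [hTdef, Finset.mem_filter, Multiset.mem_toFinset] at hQ
      have hpr := prime_of_normalized_factor Q hQ.1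
      exact ⟨Ideal.isPrime_of_prime hpr, hpr.ne_zero,
        hQ.2, Ideal.le_of_dvd (dvd_of_mem_normalizedFactors hQ.1)⟩
    have hm'le : m' ≤ m := by
      refine Finset.sup_le fun Q hQ => ?_
      obtain ⟨h1, _, h3, _⟩ := hTfacts Q hQ
      exact hkey Q h1 h3
    -- construct x to show m ≤ m'
    have hlem' : m ≤ m' := by
      set N : ℕ := (normalizedFactors L).toFinset.sup
        (fun Q => (normalizedFactors L).count Q) with hNdef
      set B : Finset (Ideal ↥R) :=
        ((normalizedFactors L).toFinset.image (fun Q => Q.comap f)).erase P with hBdef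
      have hBne : ∀ P' ∈ B, P' ≠ ⊥ ∧ Prime P' := by
        intro P' hP'
        rw [hBdef, Finset.mem_erase, Finset.mem_image] at hP'
        obtain ⟨_, Q, hQ, rfl⟩ := hP'
        rw [Multiset.mem_toFinset] at hQ
        have hne := hcomap_ne Q hQ
        have hpr := prime_of_normalized_factor Q hQ
        exact ⟨hne, Ideal.prime_of_isPrime hne (Ideal.IsPrime.comap f
          (hK := Ideal.isPrime_of_prime hpr))⟩
      set J : Ideal ↥R := ∏ P' ∈ B, P' ^ N with hJdef
      have hJne : ∀ P' ∈ B, P' ^ N ≠ (⊥ : Ideal ↥R) :=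
        fun P' hP' => pow_ne_zero N (hBne P' hP').1
      have hJ0 : J ≠ ⊥ := by
        exact Finset.prod_ne_zero_iff.mpr hJne
      set A : Ideal ↥R := P ^ m' * J with hAdef
      have hA0 : A ≠ ⊥ := mul_ne_zero (pow_ne_zero m' hP0) hJ0
      have hAcount : (normalizedFactors A).count P = m' := by
        rw [hAdef, normalizedFactors_mul (pow_ne_zero m' hP0) hJ0, Multiset.count_add,
          count_nf_pow_prime (Ideal.prime_of_isPrime hP0 hPp), if_pos rfl, hJdef,
          count_nf_prod B _ hJne]
        have : ∀ P' ∈ B, (normalizedFactors (P' ^ N)).count P = 0 := by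
          intro P' hP'
          rw [count_nf_pow_prime (hBne P' hP').2,
            if_neg (fun h => (Finset.mem_erase.mp hP').1 h.symm)]
        rw [Finset.sum_congr rfl this, Finset.sum_const_zero, add_zero]
      have hnotle : ¬ A ≤ P ^ (m' + 1) := by
        rw [le_pow_iff_count hPp hP0 hA0, hAcount]; omega
      obtain ⟨x, hxA, hxP⟩ := SetLike.not_le_iff_exists.mp hnotle
      have hx0 : x ≠ 0 := fun h => hxP (h ▸ (P ^ (m' + 1)).zero_mem)
      have hsx0 : Ideal.span {x} ≠ ⊥ := by rwa [Ne, Ideal.span_singleton_eq_bot]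
      have hfx0 : Ideal.span {f x} ≠ ⊥ := by
        rw [Ne, Ideal.span_singleton_eq_bot]
        exact fun h => hx0 (hfi (by simpa using h))
      have hmap : Ideal.map f (Ideal.span {x}) = Ideal.span {f x} := by
        rw [Ideal.map_span, Set.image_singleton]
      -- f x ∈ L
      have hxL : f x ∈ L := by
        rw [← Ideal.span_singleton_le_iff_mem, ← Ideal.dvd_iff_le,
          dvd_iff_normalizedFactors_le_normalizedFactors hL0 hfx0, Multiset.le_iff_count]
        intro Q
        by_cases hQL : Q ∈ normalizedFactors L
        · have hpr := prime_of_normalized_factor Q hQL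
          have hQp : Q.IsPrime := Ideal.isPrime_of_prime hpr
          have hQ0 : Q ≠ ⊥ := hpr.ne_zero
          have hQP0 : Q.comap f ≠ ⊥ := hcomap_ne Q hQL
          have hcnt : (normalizedFactors (Ideal.span {f x})).count Q
              = (normalizedFactors (Ideal.map f (Q.comap f))).count Q
                * (normalizedFactors (Ideal.span {x})).count (Q.comap f) := by
            rw [← hmap, count_map_eq R hQp hQ0 hQP0 _ hsx0]
          have he : padicExp Q (Ideal.map f (Q.comap f))
              = (normalizedFactors (Ideal.map f (Q.comap f))).count Q :=
            padicExp_eq_count hQp hQ0 (map_ne_bot R hQP0)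
          have hv : padicExp Q L = (normalizedFactors L).count Q :=
            padicExp_eq_count hQp hQ0 hL0
          by_cases hc : Q.comap f = P
          · -- Q lies over P
            have hQT : Q ∈ T := by
              rw [hTdef, Finset.mem_filter, Multiset.mem_toFinset]; exact ⟨hQL, hc⟩
            have hgle : g Q ≤ m' := Finset.le_sup hQT
            have he1 : 1 ≤ padicExp Q (Ideal.map f (Q.comap f)) :=
              he ▸ one_le_e R hQp hQ0 hQP0
            -- v_Q(L) ≤ e_Q * g Q
            have hvg : padicExp Q L ≤ padicExp Q (Ideal.map f (Q.comap f)) * g Q := by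
              have := Nat.le_ceil ((padicExp Q L : ℚ) /
                (padicExp Q (Ideal.map f (Q.comap f)) : ℚ))
              rw [div_le_iff₀ (by exact_mod_cast he1)] at this
              rw [mul_comm]
              exact_mod_cast this
            -- count_P(span x) ≥ m'
            have hxm' : m' ≤ (normalizedFactors (Ideal.span {x})).count P := by
              rw [← le_pow_iff_count hPp hP0 hsx0, Ideal.span_singleton_le_iff_mem]
              exact Ideal.mul_le_left hxA
            calc (normalizedFactors L).count Q = padicExp Q L := hv.symm
              _ ≤ padicExp Q (Ideal.map f (Q.comap f)) * g Q := hvg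
              _ ≤ padicExp Q (Ideal.map f (Q.comap f)) * m' :=
                  Nat.mul_le_mul_left _ hgle
              _ ≤ (normalizedFactors (Ideal.map f (Q.comap f))).count Q
                  * (normalizedFactors (Ideal.span {x})).count (Q.comap f) := by
                  rw [← he, hc]
                  exact Nat.mul_le_mul_left _ hxm'
              _ = (normalizedFactors (Ideal.span {f x})).count Q := hcnt.symm
          · -- Q lies over P' ≠ P
            have hPB : Q.comap f ∈ B := by
              rw [hBdef, Finset.mem_erase, Finset.mem_image]
              exact ⟨hc, Q, Multiset.mem_toFinset.mpr hQL, rfl⟩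
            have hxN : N ≤ (normalizedFactors (Ideal.span {x})).count (Q.comap f) := by
              rw [← le_pow_iff_count (Ideal.IsPrime.comap f (hK := hQp)) hQP0 hsx0,
                Ideal.span_singleton_le_iff_mem]
              have hAJ : A ≤ J := Ideal.mul_le_right
              have hJP : J ≤ (Q.comap f) ^ N :=
                Ideal.le_of_dvd (Finset.dvd_prod_of_mem (fun P' => P' ^ N) hPB)
              exact hJP (hAJ hxA)
            have he1 : 1 ≤ (normalizedFactors (Ideal.map f (Q.comap f))).count Q :=
              one_le_e R hQp hQ0 hQP0
            have hNL : (normalizedFactors L).count Q ≤ N :=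
              Finset.le_sup (f := fun Q => (normalizedFactors L).count Q)
                (Multiset.mem_toFinset.mpr hQL)
            calc (normalizedFactors L).count Q ≤ N := hNL
              _ ≤ 1 * (normalizedFactors (Ideal.span {x})).count (Q.comap f) := by
                  rw [one_mul]; exact hxN
              _ ≤ (normalizedFactors (Ideal.map f (Q.comap f))).count Q
                  * (normalizedFactors (Ideal.span {x})).count (Q.comap f) :=
                  Nat.mul_le_mul_right _ he1
              _ = (normalizedFactors (Ideal.span {f x})).count Q := hcnt.symm
        · rw [Multiset.count_eq_zero_of_notMem hQL]; exact Nat.zero_le _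
      -- conclude
      have : ¬ L.comap f ≤ P ^ (m' + 1) := by
        intro hle
        exact hxP (hle (show x ∈ L.comap f from hxL))
      rw [le_pow_iff_count hPp hP0 hLR0, ← hm] at this
      omega
    have hmm' : m = m' := le_antisymm hlem' hm'le
    by_cases hT : T.Nonempty
    · obtain ⟨Q₀, hQ₀T, hsup⟩ := Finset.exists_mem_eq_sup T hT g
      obtain ⟨h1, _, h3, h4⟩ := hTfacts Q₀ hQ₀T
      exact ⟨Q₀, h1, hIL.trans h4, h3, by rw [hmm', hm'def, hsup]⟩
    · refine ⟨M, hM, hIM, rfl, ?_⟩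
      have hML : M ∉ normalizedFactors L := by
        intro hmem
        exact hT ⟨M, by rw [hTdef, Finset.mem_filter, Multiset.mem_toFinset]; exact ⟨hmem, rfl⟩⟩
      have hM0 : M ≠ ⊥ := by
        intro h
        rw [h, Ideal.comap_bot_of_injective f hfi] at hPdef
        exact hP0 hPdef
      have : padicExp M L = 0 := by
        rw [padicExp_eq_count hM hM0 hL0, Multiset.count_eq_zero_of_notMem hML]
      rw [hmm', hm'def, Finset.not_nonempty_iff_eq_empty.mp hT, Finset.sup_empty, this]
      simp
  · -- upper bound
    rintro n ⟨Q, hQp, _, hQc, rfl⟩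
    exact hkey Q hQp hQc
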